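/- Let (R, μ, A) be an averaging algebra over a field k and let (μ_i)_{i≥0} be a family of k-bilinear maps R × R → R with μ_0 = μ and (A_i)_{i≥0} a family of k-linear maps R → R with A_0 = A, such that for every n ≥ 0 and all x, y, z ∈ R: Σ_{i+j=n} μ_i(μ_j(x,y), z) = Σ_{i+j=n} μ_i(x, μ_j(y,z)); Σ_{i+j+k=n} μ_k(A_i(x), A_j(y)) = Σ_{i+j+k=n} A_k(μ_j(A_i(x), y)); and Σ_{i+j+k=n} μ_k(A_i(x), A_j(y)) = Σ_{i+j+k=n} A_k(μ_j(x, A_i(y))) (the conditions for (Σ μ_i t^i, Σ A_i t^i) to be a 1-parameter formal deformation). Then (μ_1, A_1) is a 2-cocycle; explicitly, for all x, y, z ∈ R: (i) x·μ_1(y,z) − μ_1(xy, z) + μ_1(x, yz) − μ_1(x,y)·z = 0; (ii) μ_1(A(x), A(y)) + A(x)·A_1(y) + A_1(x)·A(y) = A_1(A(x)·y) + A(A_1(x)·y) + A(μ_1(A(x), y)); (iii) μ_1(A(x), A(y)) + A(x)·A_1(y) + A_1(x)·A(y) = A_1(x·A(y)) + A(x·A_1(y)) + A(μ_1(x, A(y))).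 -/

import Mathlib

/-- If `(μ_t, A_t)` is a 1-parameter formal deformation of an averaging
algebra `(R, μ, A)`, then the infinitesimal `(μ_1, A_1)` is a 2-cocycle. -/
theorem infinitesimal_is_two_cocycle
    (k : Type*) [Field k] (R : Type*) [Ring R] [Algebra k R]
    (A : R →ₗ[k] R)
    -- `(R, μ, A)` is an averaging algebra
    (havg1 : ∀ x y : R, A x * A y = A (x * A y))
    (havg2 : ∀ x y : R, A x * A y = A (A x * y))
    -- the families of bilinear and linear maps
    (m : ℕ → R →ₗ[k] R →ₗ[k] R) (a : ℕ → R →ₗ[k] R)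
    (hm0 : ∀ x y : R, m 0 x y = x * y) (ha0 : a 0 = A)
    -- the deformation equations
    (hass : ∀ (n : ℕ) (x y z : R),
      ∑ p ∈ Finset.HasAntidiagonal.antidiagonal n, m p.1 (m p.2 x y) z
        = ∑ p ∈ Finset.HasAntidiagonal.antidiagonal n, m p.1 x (m p.2 y z))
    (havl : ∀ (n : ℕ) (x y : R),
      ∑ v ∈ Finset.Nat.antidiagonalTuple 3 n, m (v 2) (a (v 0) x) (a (v 1) y)
        = ∑ v ∈ Finset.Nat.antidiagonalTuple 3 n, a (v 2) (m (v 1) (a (v 0) x) y))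
    (havr : ∀ (n : ℕ) (x y : R),
      ∑ v ∈ Finset.Nat.antidiagonalTuple 3 n, m (v 2) (a (v 0) x) (a (v 1) y)
        = ∑ v ∈ Finset.Nat.antidiagonalTuple 3 n, a (v 2) (m (v 1) x (a (v 0) y))) :
    -- `(μ_1, A_1)` is a 2-cocycle
    (∀ x y z : R, x * m 1 y z - m 1 (x * y) z + m 1 x (y * z) - m 1 x y * z = 0) ∧
    (∀ x y : R, m 1 (A x) (A y) + A x * a 1 y + a 1 x * A y
        = a 1 (A x * y) + A (a 1 x * y) + A (m 1 (A x) y)) ∧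
    (∀ x y : R, m 1 (A x) (A y) + A x * a 1 y + a 1 x * A y
        = a 1 (x * A y) + A (x * a 1 y) + A (m 1 x (A y))) := by
  have hAD : Finset.Nat.antidiagonalTuple 3 1
      = ({![0,0,1], ![0,1,0], ![1,0,0]} : Finset (Fin 3 → ℕ)) := by decide
  have hAD2 : Finset.HasAntidiagonal.antidiagonal 1 = ({(0,1),(1,0)} : Finset (ℕ×ℕ)) := by decide
  refine ⟨fun x y z => ?_, fun x y => ?_, fun x y => ?_⟩
  · have h := hass 1 x y z
    rw [hAD2, Finset.sum_pair (by decide), Finset.sum_pair (by decide)] at h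
    simp only [hm0] at h
    have e : x * m 1 y z - m 1 (x * y) z + m 1 x (y * z) - m 1 x y * z
        = (x * m 1 y z + m 1 x (y * z)) - (m 1 x y * z + m 1 (x * y) z) := by abel
    rw [e, ← h, sub_self]
  · have h := havl 1 x y
    rw [hAD, Finset.sum_insert (by decide), Finset.sum_insert (by decide),
      Finset.sum_singleton, Finset.sum_insert (by decide), Finset.sum_insert (by decide),
      Finset.sum_singleton] at h
    simp only [Matrix.cons_val_zero, Matrix.cons_val_one, Matrix.head_cons,
      Matrix.cons_val_two, Matrix.tail_cons, hm0, ha0] at h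
    abel_nf at h ⊢
    exact h
  · have h := havr 1 x y
    rw [hAD, Finset.sum_insert (by decide), Finset.sum_insert (by decide),
      Finset.sum_singleton, Finset.sum_insert (by decide), Finset.sum_insert (by decide),
      Finset.sum_singleton] at h
    simp only [Matrix.cons_val_zero, Matrix.cons_val_one, Matrix.head_cons,
      Matrix.cons_val_two, Matrix.tail_cons, hm0, ha0] at h
    abel_nf at h ⊢
    exact h
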